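/- Suppose Σ_{j=1}^{N} a_j = Σ_{j=1}^{N} c_j. Then for every n ≥ 1, all real numbers k_1, ..., k_n, and every integer m with 1 ≤ m ≤ n, one has Σ_{i=1}^{2^{n-1}N} x_i^m = Σ_{i=1}^{2^{n-1}N} y_i^m, where x_i and y_i are the entries of the sequences x^{(n)} and y^{(n)} of length 2^{n-1}N produced by the doubling construction started from N initial terms on each side. -/

import Mathlib

/-- The pair of sequences `(x^{(t+1)}, y^{(t+1)})` of length `2^t * N` (0-based internal
level `t` corresponds to the paper's level `m = t + 1`) produced by the doubling
construction started from the `N` initial terms `a 0, ..., a (N-1)` and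
`c 0, ..., c (N-1)`.  `(seqXYN N a c k t i).1` is the `i`-th entry (0-based) of
`x^{(t+1)}` and `.2` that of `y^{(t+1)}`. -/
noncomputable def seqXYN (N : ℕ) (a c : ℕ → ℝ) (k : ℕ → ℝ) : ℕ → ℕ → ℝ × ℝ
  | 0, i => (a i + k 1, c i + k 1)
  | t + 1, i =>
      if i < 2 ^ t * N then seqXYN N a c k t i
      else ((seqXYN N a c k t (i - 2 ^ t * N)).2 + k (t + 2),
            (seqXYN N a c k t (i - 2 ^ t * N)).1 + k (t + 2))

/-- `XN N a c k n i` is the entry `x_{i+1}` of the sequence `x^{(n)}` (for `n ≥ 1`,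
`0 ≤ i < 2^(n-1) * N`). -/
noncomputable def XN (N : ℕ) (a c : ℕ → ℝ) (k : ℕ → ℝ) (n i : ℕ) : ℝ :=
  (seqXYN N a c k (n - 1) i).1

/-- `YN N a c k n i` is the entry `y_{i+1}` of the sequence `y^{(n)}` (for `n ≥ 1`,
`0 ≤ i < 2^(n-1) * N`). -/
noncomputable def YN (N : ℕ) (a c : ℕ → ℝ) (k : ℕ → ℝ) (n i : ℕ) : ℝ :=
  (seqXYN N a c k (n - 1) i).2

open Finset

lemma my_sum_range_add (f : ℕ → ℝ) (L M : ℕ) :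
    ∑ i ∈ range (L + M), f i = ∑ i ∈ range L, f i + ∑ i ∈ range M, f (L + i) := by
  rw [range_eq_Ico, ← Finset.sum_Ico_consecutive f (Nat.zero_le L) (Nat.le_add_right L M),
    ← range_eq_Ico]
  congr 1
  rw [Finset.sum_Ico_eq_sum_range]
  simp

lemma key_lemma (L : ℕ) (u v : ℕ → ℝ) (K : ℝ) (m : ℕ)
    (h : ∀ j, j < m → ∑ i ∈ range L, u i ^ j = ∑ i ∈ range L, v i ^ j) :
    ∑ i ∈ range L, (u i + K) ^ m + ∑ i ∈ range L, v i ^ m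
      = ∑ i ∈ range L, (v i + K) ^ m + ∑ i ∈ range L, u i ^ m := by
  have expand : ∀ w : ℕ → ℝ, ∑ i ∈ range L, (w i + K) ^ m
      = ∑ j ∈ range (m + 1), (∑ i ∈ range L, w i ^ j) * (K ^ (m - j) * (m.choose j)) := by
    intro w
    simp_rw [add_pow, Finset.sum_mul]
    rw [Finset.sum_comm]
    exact Finset.sum_congr rfl fun _ _ => Finset.sum_congr rfl fun _ _ => by ring
  rw [expand u, expand v, Finset.sum_range_succ, Finset.sum_range_succ]
  have : ∑ j ∈ range m, (∑ i ∈ range L, u i ^ j) * (K ^ (m - j) * (m.choose j))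
      = ∑ j ∈ range m, (∑ i ∈ range L, v i ^ j) * (K ^ (m - j) * (m.choose j)) := by
    refine Finset.sum_congr rfl fun j hj => ?_
    rw [h j (Finset.mem_range.mp hj)]
  rw [this]
  simp
  ring

lemma main_ind (N : ℕ) (a c : ℕ → ℝ) (k : ℕ → ℝ)
    (h : ∑ j ∈ Finset.range N, a j = ∑ j ∈ Finset.range N, c j) :
    ∀ t, ∀ m ≤ t + 1,
      ∑ i ∈ range (2 ^ t * N), (seqXYN N a c k t i).1 ^ m
        = ∑ i ∈ range (2 ^ t * N), (seqXYN N a c k t i).2 ^ m := by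
  intro t
  induction t with
  | zero =>
    intro m hm
    interval_cases m
    · simp
    · simp only [seqXYN, pow_one, pow_zero, one_mul]
      rw [Finset.sum_add_distrib, Finset.sum_add_distrib, h]
  | succ t ih =>
    intro m hm
    set L := 2 ^ t * N with hL
    have hsplit : 2 ^ (t + 1) * N = L + L := by rw [hL]; ring
    have e1 : ∀ i < L, seqXYN N a c k (t + 1) i = seqXYN N a c k t i := by
      intro i hi; simp [seqXYN, show i < 2 ^ t * N from hi]
    have e2 : ∀ i < L, seqXYN N a c k (t + 1) (L + i)
        = ((seqXYN N a c k t i).2 + k (t + 2), (seqXYN N a c k t i).1 + k (t + 2)) := by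
      intro i hi
      have : ¬ (L + i < L) := by omega
      simp [seqXYN, ← hL, this, Nat.add_sub_cancel_left]
    rw [hsplit, my_sum_range_add, my_sum_range_add]
    have A1 : ∑ i ∈ range L, (seqXYN N a c k (t + 1) i).1 ^ m
        = ∑ i ∈ range L, (seqXYN N a c k t i).1 ^ m :=
      Finset.sum_congr rfl fun i hi => by rw [e1 i (mem_range.mp hi)]
    have A2 : ∑ i ∈ range L, (seqXYN N a c k (t + 1) i).2 ^ m
        = ∑ i ∈ range L, (seqXYN N a c k t i).2 ^ m :=
      Finset.sum_congr rfl fun i hi => by rw [e1 i (mem_range.mp hi)]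
    have B1 : ∑ i ∈ range L, (seqXYN N a c k (t + 1) (L + i)).1 ^ m
        = ∑ i ∈ range L, ((seqXYN N a c k t i).2 + k (t + 2)) ^ m :=
      Finset.sum_congr rfl fun i hi => by rw [e2 i (mem_range.mp hi)]
    have B2 : ∑ i ∈ range L, (seqXYN N a c k (t + 1) (L + i)).2 ^ m
        = ∑ i ∈ range L, ((seqXYN N a c k t i).1 + k (t + 2)) ^ m :=
      Finset.sum_congr rfl fun i hi => by rw [e2 i (mem_range.mp hi)]
    rw [A1, A2, B1, B2]
    have key := key_lemma L (fun i => (seqXYN N a c k t i).2)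
      (fun i => (seqXYN N a c k t i).1) (k (t + 2)) m
      (fun j hj => (ih j (by omega)).symm)
    linarith

theorem full_symmetric_system_N (N : ℕ) (hN : 1 ≤ N) (a c : ℕ → ℝ)
    (h : ∑ j ∈ Finset.range N, a j = ∑ j ∈ Finset.range N, c j)
    (n : ℕ) (hn : 1 ≤ n) (k : ℕ → ℝ) (m : ℕ) (hm1 : 1 ≤ m) (hmn : m ≤ n) :
    ∑ i ∈ Finset.range (2 ^ (n - 1) * N), XN N a c k n i ^ m =
      ∑ i ∈ Finset.range (2 ^ (n - 1) * N), YN N a c k n i ^ m := by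
  have := main_ind N a c k h (n - 1) m (by omega)
  simpa [XN, YN] using this
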